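/- Let d = 2, let X^1 and X^2 be additive groups, and for j ∈ {1,2} let k^j : X^j × X^j → ℝ be a symmetric positive semidefinite kernel that is translation invariant, i.e. k^j(x,y) = κ^j(x−y) for some function κ^j, with 0 ≤ k^j(x,y) ≤ K^j := κ^j(0) for all x,y, and that has non-empty level sets, i.e. for every ε ∈ (0, K^j) there exist x,y ∈ X^j with k^j(x,y) ≤ ε. Then for every n ≥ 3, the supremum over all pairs π = (π^1,π^2) of permutations of {1,…,n} and over all datasets X, X̃ of size n with d_ham(X, X̃) ≤ 1 of |dHSIC^(X^π) − dHSIC^(X̃^π)| is at least 4(n − 2.5)·n^{-2}·(K^1 K^2)^{1/2}. -/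

import Mathlib

open Finset

noncomputable section

/-- A symmetric positive semidefinite kernel. -/
def IsSymmPSDKernel {Y : Type*} (k : Y → Y → ℝ) : Prop :=
  (∀ x y, k x y = k y x) ∧
  ∀ (m : ℕ) (x : Fin m → Y) (c : Fin m → ℝ),
    0 ≤ ∑ a : Fin m, ∑ b : Fin m, c a * c b * k (x a) (x b)

/-- Squared empirical dHSIC (V-statistic) of a dataset of size `n`. -/
def Vstat {d n : ℕ} {X : Fin d → Type*} (k : ∀ j, X j → X j → ℝ)
    (D : Fin n → ∀ j, X j) : ℝ :=
  ((n : ℝ) ^ 2)⁻¹ * ∑ i₁ : Fin n, ∑ i₂ : Fin n, ∏ j, k j (D i₁ j) (D i₂ j)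
    + ((n : ℝ) ^ (2 * d))⁻¹ *
        ∑ a : Fin d → Fin n, ∑ b : Fin d → Fin n, ∏ j, k j (D (a j) j) (D (b j) j)
    - 2 * ((n : ℝ) ^ (d + 1))⁻¹ *
        ∑ i₁ : Fin n, ∑ c : Fin d → Fin n, ∏ j, k j (D i₁ j) (D (c j) j)

/-- Empirical dHSIC. -/
def dHSICemp {d n : ℕ} {X : Fin d → Type*} (k : ∀ j, X j → X j → ℝ)
    (D : Fin n → ∀ j, X j) : ℝ :=
  Real.sqrt (Vstat k D)

/-- Dataset permuted by a `d`-tuple of permutations. -/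
def permuteD {d n : ℕ} {X : Fin d → Type*} (π : Fin d → Equiv.Perm (Fin n))
    (D : Fin n → ∀ j, X j) : Fin n → ∀ j, X j :=
  fun i j => D (π j i) j

/-- Hamming distance between two datasets. -/
def hamD {d n : ℕ} {X : Fin d → Type*} (D D' : Fin n → ∀ j, X j) : ℕ :=
  Set.ncard {i | D i ≠ D' i}

section MyAux

variable {n : ℕ}

lemma myAux_sum_ite_one (z : Fin n) (a c : ℝ) :
    ∑ i : Fin n, (if i = z then a else c) = a + ((n : ℝ) - 1) * c := by
  have h : ∀ i : Fin n, (if i = z then a else c)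
      = (if i = z then a - c else 0) + c := by
    intro i; by_cases h : i = z <;> simp [h]
  rw [Finset.sum_congr rfl fun i _ => h i, Finset.sum_add_distrib]
  rw [Finset.sum_ite_eq' Finset.univ z fun _ => a - c]
  simp [Finset.card_univ, mul_comm]
  ring

lemma myAux_sum_ite_two (z0 z1 : Fin n) (hz : z0 ≠ z1) (f : Fin n → ℝ) (a b c : ℝ)
    (h0 : f z0 = a) (h1 : f z1 = b) (hc : ∀ i, i ≠ z0 → i ≠ z1 → f i = c) :
    ∑ i : Fin n, f i = a + b + ((n : ℝ) - 2) * c := by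
  have h : ∀ i : Fin n, f i
      = (if i = z0 then a - c else 0) + ((if i = z1 then b - c else 0) + c) := by
    intro i
    by_cases h0' : i = z0
    · subst h0'; rw [if_pos rfl, if_neg hz, h0]; ring
    · by_cases h1' : i = z1
      · subst h1'; rw [if_neg h0', if_pos rfl, h1]; ring
      · rw [if_neg h0', if_neg h1', hc i h0' h1']; ring
  rw [Finset.sum_congr rfl fun i _ => h i, Finset.sum_add_distrib,
    Finset.sum_add_distrib]
  rw [Finset.sum_ite_eq' Finset.univ z0 fun _ => a - c,
    Finset.sum_ite_eq' Finset.univ z1 fun _ => b - c]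
  simp [Finset.card_univ, mul_comm]
  ring

lemma myAux_sum_ite_pair (z0 z1 : Fin n) (hz : z0 ≠ z1) (a c : ℝ) :
    ∑ i : Fin n, (if i = z0 ∨ i = z1 then a else c) = a + a + ((n : ℝ) - 2) * c :=
  myAux_sum_ite_two z0 z1 hz _ a a c (by simp) (by simp)
    (fun i h0 h1 => by simp [h0, h1])

lemma myAux_sum_pi_two (F : Fin n → Fin n → ℝ) :
    ∑ a : Fin 2 → Fin n, F (a 0) (a 1) = ∑ x : Fin n, ∑ y : Fin n, F x y := by
  calc ∑ a : Fin 2 → Fin n, F (a 0) (a 1)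
      = ∑ p : Fin n × Fin n, F p.1 p.2 :=
        Fintype.sum_equiv (piFinTwoEquiv fun _ => Fin n) _ _ fun a => rfl
    _ = ∑ x : Fin n, ∑ y : Fin n, F x y := Fintype.sum_prod_type (f := fun p => F p.1 p.2)

lemma myAux_Vstat_two {X : Fin 2 → Type*} (k : ∀ j, X j → X j → ℝ) (D : Fin n → ∀ j, X j) :
    Vstat k D =
      ((n : ℝ) ^ 2)⁻¹ * ∑ i₁ : Fin n, ∑ i₂ : Fin n,
          k 0 (D i₁ 0) (D i₂ 0) * k 1 (D i₁ 1) (D i₂ 1)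
      + ((n : ℝ) ^ 4)⁻¹ * ((∑ i₁ : Fin n, ∑ i₂ : Fin n, k 0 (D i₁ 0) (D i₂ 0)) *
            (∑ i₁ : Fin n, ∑ i₂ : Fin n, k 1 (D i₁ 1) (D i₂ 1)))
      - 2 * ((n : ℝ) ^ 3)⁻¹ *
          ∑ i : Fin n, (∑ c : Fin n, k 0 (D i 0) (D c 0)) * (∑ c : Fin n, k 1 (D i 1) (D c 1)) := by
  have hT2 : (∑ a : Fin 2 → Fin n, ∑ b : Fin 2 → Fin n, ∏ j, k j (D (a j) j) (D (b j) j))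
      = (∑ i₁ : Fin n, ∑ i₂ : Fin n, k 0 (D i₁ 0) (D i₂ 0)) *
          (∑ i₁ : Fin n, ∑ i₂ : Fin n, k 1 (D i₁ 1) (D i₂ 1)) := by
    calc ∑ a : Fin 2 → Fin n, ∑ b : Fin 2 → Fin n, ∏ j, k j (D (a j) j) (D (b j) j)
        = ∑ a : Fin 2 → Fin n,
            (∑ x : Fin n, k 0 (D (a 0) 0) (D x 0)) * (∑ y : Fin n, k 1 (D (a 1) 1) (D y 1)) := by
          refine Finset.sum_congr rfl fun a _ => ?_
          rw [Finset.sum_congr rfl fun (b : Fin 2 → Fin n) _ =>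
            Fin.prod_univ_two (fun j => k j (D (a j) j) (D (b j) j))]
          rw [myAux_sum_pi_two (fun x y => k 0 (D (a 0) 0) (D x 0) * k 1 (D (a 1) 1) (D y 1))]
          rw [← Finset.sum_mul_sum]
      _ = ∑ x : Fin n, ∑ y : Fin n,
            (∑ c : Fin n, k 0 (D x 0) (D c 0)) * (∑ c : Fin n, k 1 (D y 1) (D c 1)) :=
          myAux_sum_pi_two
            (fun x y => (∑ c : Fin n, k 0 (D x 0) (D c 0)) * (∑ c : Fin n, k 1 (D y 1) (D c 1)))
      _ = (∑ x : Fin n, ∑ c : Fin n, k 0 (D x 0) (D c 0)) *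
            (∑ y : Fin n, ∑ c : Fin n, k 1 (D y 1) (D c 1)) := by
          rw [Finset.sum_mul_sum]
  have hT3 : (∑ i₁ : Fin n, ∑ c : Fin 2 → Fin n, ∏ j, k j (D i₁ j) (D (c j) j))
      = ∑ i : Fin n, (∑ c : Fin n, k 0 (D i 0) (D c 0)) * (∑ c : Fin n, k 1 (D i 1) (D c 1)) := by
    refine Finset.sum_congr rfl fun i _ => ?_
    rw [Finset.sum_congr rfl fun (c : Fin 2 → Fin n) _ =>
      Fin.prod_univ_two (fun j => k j (D i j) (D (c j) j))]
    rw [myAux_sum_pi_two (fun x y => k 0 (D i 0) (D x 0) * k 1 (D i 1) (D y 1))]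
    rw [← Finset.sum_mul_sum]
  have hT1 : (∑ i₁ : Fin n, ∑ i₂ : Fin n, ∏ j, k j (D i₁ j) (D i₂ j))
      = ∑ i₁ : Fin n, ∑ i₂ : Fin n, k 0 (D i₁ 0) (D i₂ 0) * k 1 (D i₁ 1) (D i₂ 1) := by
    simp only [Fin.prod_univ_two]
  unfold Vstat
  rw [hT1, hT2, hT3]

lemma myAux_Vstat_outlier (hn : n ≠ 0) {X : Fin 2 → Type*} (k : ∀ j, X j → X j → ℝ)
    (u v : ∀ j, X j) (K e : Fin 2 → ℝ)
    (huu : ∀ j, k j (u j) (u j) = K j) (hvv : ∀ j, k j (v j) (v j) = K j)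
    (huv : ∀ j, k j (u j) (v j) = e j) (hvu : ∀ j, k j (v j) (u j) = e j)
    (z : Fin 2 → Fin n) (hz : z 0 ≠ z 1) :
    Vstat k (fun i j => if i = z j then u j else v j)
      = 4 * ((K 0 - e 0) * (K 1 - e 1)) / (n : ℝ) ^ 4 := by
  have hN : ((n : ℝ)) ≠ 0 := Nat.cast_ne_zero.mpr hn
  have hker : ∀ (j : Fin 2) (i i' : Fin n),
      k j (if i = z j then u j else v j) (if i' = z j then u j else v j)
        = if i = z j then (if i' = z j then K j else e j)
          else (if i' = z j then e j else K j) := by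
    intro j i i'
    by_cases h : i = z j <;> by_cases h' : i' = z j <;>
      simp [h, h', huu, hvv, huv, hvu]
  rw [myAux_Vstat_two]
  simp only [hker]
  have hrow : ∀ (j : Fin 2) (i : Fin n),
      (∑ i' : Fin n, if i = z j then (if i' = z j then K j else e j)
          else (if i' = z j then e j else K j))
        = if i = z j then K j + ((n : ℝ) - 1) * e j
          else e j + ((n : ℝ) - 1) * K j := by
    intro j i
    by_cases h : i = z j
    · simp only [if_pos h]; exact myAux_sum_ite_one (z j) (K j) (e j)
    · simp only [if_neg h]; exact myAux_sum_ite_one (z j) (e j) (K j)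
  have hA : ∀ j : Fin 2,
      (∑ i : Fin n, ∑ i' : Fin n, if i = z j then (if i' = z j then K j else e j)
          else (if i' = z j then e j else K j))
        = (K j + ((n : ℝ) - 1) * e j) + ((n : ℝ) - 1) * (e j + ((n : ℝ) - 1) * K j) := by
    intro j
    rw [Finset.sum_congr rfl fun i _ => hrow j i]
    exact myAux_sum_ite_one _ _ _
  have hS1 : (∑ i : Fin n, ∑ i' : Fin n,
        ((if i = z 0 then (if i' = z 0 then K 0 else e 0)
          else (if i' = z 0 then e 0 else K 0)) *
         (if i = z 1 then (if i' = z 1 then K 1 else e 1)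
          else (if i' = z 1 then e 1 else K 1))))
      = (K 0 * K 1 + e 0 * e 1 + ((n : ℝ) - 2) * (e 0 * K 1))
        + (e 0 * e 1 + K 0 * K 1 + ((n : ℝ) - 2) * (K 0 * e 1))
        + ((n : ℝ) - 2) * (e 0 * K 1 + K 0 * e 1 + ((n : ℝ) - 2) * (K 0 * K 1)) := by
    refine myAux_sum_ite_two (z 0) (z 1) hz _ _ _ _ ?_ ?_ ?_
    · simp only [if_pos rfl, if_neg hz]
      refine myAux_sum_ite_two (z 0) (z 1) hz _ _ _ _ ?_ ?_ ?_
      · simp [hz]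
      · simp [hz.symm]
      · intro i hi0 hi1; simp [hi0, hi1]
    · simp only [if_pos rfl, if_neg hz.symm]
      refine myAux_sum_ite_two (z 0) (z 1) hz _ _ _ _ ?_ ?_ ?_
      · simp [hz, hz.symm]
      · simp [hz.symm]
      · intro i hi0 hi1; simp [hi0, hi1]
    · intro i hi0 hi1
      simp only [if_neg hi0, if_neg hi1]
      refine myAux_sum_ite_two (z 0) (z 1) hz _ _ _ _ ?_ ?_ ?_
      · simp [hz]
      · simp [hz.symm]
      · intro i' hi0' hi1'; simp [hi0', hi1']
  have hQ : (∑ i : Fin n,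
        (∑ c : Fin n, if i = z 0 then (if c = z 0 then K 0 else e 0)
            else (if c = z 0 then e 0 else K 0)) *
        (∑ c : Fin n, if i = z 1 then (if c = z 1 then K 1 else e 1)
            else (if c = z 1 then e 1 else K 1)))
      = (K 0 + ((n : ℝ) - 1) * e 0) * (e 1 + ((n : ℝ) - 1) * K 1)
        + (e 0 + ((n : ℝ) - 1) * K 0) * (K 1 + ((n : ℝ) - 1) * e 1)
        + ((n : ℝ) - 2) * ((e 0 + ((n : ℝ) - 1) * K 0) * (e 1 + ((n : ℝ) - 1) * K 1)) := by
    refine myAux_sum_ite_two (z 0) (z 1) hz _ _ _ _ ?_ ?_ ?_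
    · rw [hrow 0 (z 0), hrow 1 (z 0), if_pos rfl, if_neg hz]
    · rw [hrow 0 (z 1), hrow 1 (z 1), if_pos rfl, if_neg hz.symm]
    · intro i hi0 hi1
      rw [hrow 0 i, hrow 1 i, if_neg hi0, if_neg hi1]
  rw [hS1, hQ, hA 0, hA 1]
  field_simp
  ring

lemma myAux_Vstat_pair (hn : n ≠ 0) {X : Fin 2 → Type*} (k : ∀ j, X j → X j → ℝ)
    (u v : ∀ j, X j) (K e : Fin 2 → ℝ)
    (huu : ∀ j, k j (u j) (u j) = K j) (hvv : ∀ j, k j (v j) (v j) = K j)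
    (huv : ∀ j, k j (u j) (v j) = e j) (hvu : ∀ j, k j (v j) (u j) = e j)
    (z0 z1 : Fin n) (hz : z0 ≠ z1) :
    Vstat k (fun i j => if i = z0 ∨ i = z1 then u j else v j)
      = 4 * (2 * (n : ℝ) - 4) ^ 2 * ((K 0 - e 0) * (K 1 - e 1)) / (n : ℝ) ^ 4 := by
  have hN : ((n : ℝ)) ≠ 0 := Nat.cast_ne_zero.mpr hn
  have hker : ∀ (j : Fin 2) (i i' : Fin n),
      k j (if i = z0 ∨ i = z1 then u j else v j) (if i' = z0 ∨ i' = z1 then u j else v j)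
        = if i = z0 ∨ i = z1 then (if i' = z0 ∨ i' = z1 then K j else e j)
          else (if i' = z0 ∨ i' = z1 then e j else K j) := by
    intro j i i'
    by_cases h : i = z0 ∨ i = z1 <;> by_cases h' : i' = z0 ∨ i' = z1 <;>
      simp [h, h', huu, hvv, huv, hvu]
  rw [myAux_Vstat_two]
  simp only [hker]
  have hrow : ∀ (j : Fin 2) (i : Fin n),
      (∑ i' : Fin n, if i = z0 ∨ i = z1 then (if i' = z0 ∨ i' = z1 then K j else e j)
          else (if i' = z0 ∨ i' = z1 then e j else K j))
        = if i = z0 ∨ i = z1 then K j + K j + ((n : ℝ) - 2) * e j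
          else e j + e j + ((n : ℝ) - 2) * K j := by
    intro j i
    by_cases h : i = z0 ∨ i = z1
    · simp only [if_pos h]; exact myAux_sum_ite_pair z0 z1 hz (K j) (e j)
    · simp only [if_neg h]; exact myAux_sum_ite_pair z0 z1 hz (e j) (K j)
  have hA : ∀ j : Fin 2,
      (∑ i : Fin n, ∑ i' : Fin n, if i = z0 ∨ i = z1 then (if i' = z0 ∨ i' = z1 then K j else e j)
          else (if i' = z0 ∨ i' = z1 then e j else K j))
        = (K j + K j + ((n : ℝ) - 2) * e j) + (K j + K j + ((n : ℝ) - 2) * e j)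
          + ((n : ℝ) - 2) * (e j + e j + ((n : ℝ) - 2) * K j) := by
    intro j
    rw [Finset.sum_congr rfl fun i _ => hrow j i]
    exact myAux_sum_ite_pair z0 z1 hz _ _
  have hp0 : z0 = z0 ∨ z0 = z1 := Or.inl rfl
  have hp1 : z1 = z0 ∨ z1 = z1 := Or.inr rfl
  have hS1 : (∑ i : Fin n, ∑ i' : Fin n,
        ((if i = z0 ∨ i = z1 then (if i' = z0 ∨ i' = z1 then K 0 else e 0)
          else (if i' = z0 ∨ i' = z1 then e 0 else K 0)) *
         (if i = z0 ∨ i = z1 then (if i' = z0 ∨ i' = z1 then K 1 else e 1)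
          else (if i' = z0 ∨ i' = z1 then e 1 else K 1))))
      = (K 0 * K 1 + K 0 * K 1 + ((n : ℝ) - 2) * (e 0 * e 1))
        + (K 0 * K 1 + K 0 * K 1 + ((n : ℝ) - 2) * (e 0 * e 1))
        + ((n : ℝ) - 2) * (e 0 * e 1 + e 0 * e 1 + ((n : ℝ) - 2) * (K 0 * K 1)) := by
    have hinner_top : ∀ i : Fin n, (i = z0 ∨ i = z1) →
        (∑ i' : Fin n,
          ((if i = z0 ∨ i = z1 then (if i' = z0 ∨ i' = z1 then K 0 else e 0)
            else (if i' = z0 ∨ i' = z1 then e 0 else K 0)) *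
           (if i = z0 ∨ i = z1 then (if i' = z0 ∨ i' = z1 then K 1 else e 1)
            else (if i' = z0 ∨ i' = z1 then e 1 else K 1))))
          = K 0 * K 1 + K 0 * K 1 + ((n : ℝ) - 2) * (e 0 * e 1) := by
      intro i hi
      simp only [if_pos hi]
      refine myAux_sum_ite_two z0 z1 hz _ _ _ _ ?_ ?_ ?_
      · simp [hp0]
      · simp [hp1]
      · intro i' h0' h1'; simp [h0', h1']
    refine myAux_sum_ite_two z0 z1 hz _ _ _ _ (hinner_top z0 hp0) (hinner_top z1 hp1) ?_
    · intro i hi0 hi1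
      have hni : ¬(i = z0 ∨ i = z1) := not_or.mpr ⟨hi0, hi1⟩
      simp only [if_neg hni]
      refine myAux_sum_ite_two z0 z1 hz _ _ _ _ ?_ ?_ ?_
      · simp [hp0]
      · simp [hp1]
      · intro i' h0' h1'; simp [h0', h1']
  have hQ : (∑ i : Fin n,
        (∑ c : Fin n, if i = z0 ∨ i = z1 then (if c = z0 ∨ c = z1 then K 0 else e 0)
            else (if c = z0 ∨ c = z1 then e 0 else K 0)) *
        (∑ c : Fin n, if i = z0 ∨ i = z1 then (if c = z0 ∨ c = z1 then K 1 else e 1)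
            else (if c = z0 ∨ c = z1 then e 1 else K 1)))
      = (K 0 + K 0 + ((n : ℝ) - 2) * e 0) * (K 1 + K 1 + ((n : ℝ) - 2) * e 1)
        + (K 0 + K 0 + ((n : ℝ) - 2) * e 0) * (K 1 + K 1 + ((n : ℝ) - 2) * e 1)
        + ((n : ℝ) - 2) * ((e 0 + e 0 + ((n : ℝ) - 2) * K 0) * (e 1 + e 1 + ((n : ℝ) - 2) * K 1)) := by
    refine myAux_sum_ite_two z0 z1 hz _ _ _ _ ?_ ?_ ?_
    · rw [hrow 0 z0, hrow 1 z0, if_pos hp0, if_pos hp0]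
    · rw [hrow 0 z1, hrow 1 z1, if_pos hp1, if_pos hp1]
    · intro i hi0 hi1
      have hni : ¬(i = z0 ∨ i = z1) := not_or.mpr ⟨hi0, hi1⟩
      rw [hrow 0 i, hrow 1 i, if_neg hni, if_neg hni]
  rw [hS1, hQ, hA 0, hA 1]
  field_simp
  ring

lemma myAux_Vstat_le (hn : n ≠ 0) {X : Fin 2 → Type*} (k : ∀ j, X j → X j → ℝ)
    (K : Fin 2 → ℝ) (hbdd : ∀ j, ∀ x y : X j, 0 ≤ k j x y ∧ k j x y ≤ K j)
    (hK : ∀ j, 0 ≤ K j) (D : Fin n → ∀ j, X j) :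
    Vstat k D ≤ 2 * (K 0 * K 1) := by
  have hNpos : (0 : ℝ) < (n : ℝ) := by
    exact_mod_cast Nat.pos_of_ne_zero hn
  rw [myAux_Vstat_two]
  have hS1 : (∑ i₁ : Fin n, ∑ i₂ : Fin n, k 0 (D i₁ 0) (D i₂ 0) * k 1 (D i₁ 1) (D i₂ 1))
      ≤ (n : ℝ) ^ 2 * (K 0 * K 1) := by
    calc (∑ i₁ : Fin n, ∑ i₂ : Fin n, k 0 (D i₁ 0) (D i₂ 0) * k 1 (D i₁ 1) (D i₂ 1))
        ≤ ∑ _i₁ : Fin n, ∑ _i₂ : Fin n, K 0 * K 1 := by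
          refine Finset.sum_le_sum fun i₁ _ => Finset.sum_le_sum fun i₂ _ => ?_
          exact mul_le_mul (hbdd 0 _ _).2 (hbdd 1 _ _).2 (hbdd 1 _ _).1 (hK 0)
      _ = (n : ℝ) ^ 2 * (K 0 * K 1) := by
          simp [Finset.sum_const, Finset.card_univ]; ring
  have hAbd : ∀ j : Fin 2, ∀ x : Fin n → X j, ∀ y : Fin n → X j,
      (∑ i₁ : Fin n, ∑ i₂ : Fin n, k j (x i₁) (y i₂)) ≤ (n : ℝ) ^ 2 * K j := by
    intro j x y
    calc (∑ i₁ : Fin n, ∑ i₂ : Fin n, k j (x i₁) (y i₂))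
        ≤ ∑ _i₁ : Fin n, ∑ _i₂ : Fin n, K j := by
          refine Finset.sum_le_sum fun i₁ _ => Finset.sum_le_sum fun i₂ _ => ?_
          exact (hbdd j _ _).2
      _ = (n : ℝ) ^ 2 * K j := by
          simp [Finset.sum_const, Finset.card_univ]; ring
  have hA0 := hAbd 0 (fun i => D i 0) (fun i => D i 0)
  have hA1 := hAbd 1 (fun i => D i 1) (fun i => D i 1)
  have hA0nn : 0 ≤ ∑ i₁ : Fin n, ∑ i₂ : Fin n, k 0 (D i₁ 0) (D i₂ 0) :=
    Finset.sum_nonneg fun i₁ _ => Finset.sum_nonneg fun i₂ _ => (hbdd 0 _ _).1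
  have hA1nn : 0 ≤ ∑ i₁ : Fin n, ∑ i₂ : Fin n, k 1 (D i₁ 1) (D i₂ 1) :=
    Finset.sum_nonneg fun i₁ _ => Finset.sum_nonneg fun i₂ _ => (hbdd 1 _ _).1
  have hAB : (∑ i₁ : Fin n, ∑ i₂ : Fin n, k 0 (D i₁ 0) (D i₂ 0)) *
        (∑ i₁ : Fin n, ∑ i₂ : Fin n, k 1 (D i₁ 1) (D i₂ 1))
      ≤ (n : ℝ) ^ 4 * (K 0 * K 1) := by
    calc (∑ i₁ : Fin n, ∑ i₂ : Fin n, k 0 (D i₁ 0) (D i₂ 0)) *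
          (∑ i₁ : Fin n, ∑ i₂ : Fin n, k 1 (D i₁ 1) (D i₂ 1))
        ≤ ((n : ℝ) ^ 2 * K 0) * ((n : ℝ) ^ 2 * K 1) := by
          exact mul_le_mul hA0 hA1 hA1nn (mul_nonneg (by positivity) (hK 0))
      _ = (n : ℝ) ^ 4 * (K 0 * K 1) := by ring
  have hQnn : 0 ≤ ∑ i : Fin n,
      (∑ c : Fin n, k 0 (D i 0) (D c 0)) * (∑ c : Fin n, k 1 (D i 1) (D c 1)) := by
    refine Finset.sum_nonneg fun i _ => mul_nonneg ?_ ?_ <;>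
      exact Finset.sum_nonneg fun c _ => (hbdd _ _ _).1
  have h1 : ((n : ℝ) ^ 2)⁻¹ *
      (∑ i₁ : Fin n, ∑ i₂ : Fin n, k 0 (D i₁ 0) (D i₂ 0) * k 1 (D i₁ 1) (D i₂ 1))
      ≤ K 0 * K 1 := by
    rw [inv_mul_le_iff₀ (by positivity)]
    exact hS1
  have h2 : ((n : ℝ) ^ 4)⁻¹ * ((∑ i₁ : Fin n, ∑ i₂ : Fin n, k 0 (D i₁ 0) (D i₂ 0)) *
      (∑ i₁ : Fin n, ∑ i₂ : Fin n, k 1 (D i₁ 1) (D i₂ 1))) ≤ K 0 * K 1 := by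
    rw [inv_mul_le_iff₀ (by positivity)]
    exact hAB
  have h3 : 0 ≤ 2 * ((n : ℝ) ^ 3)⁻¹ *
      ∑ i : Fin n, (∑ c : Fin n, k 0 (D i 0) (D c 0)) * (∑ c : Fin n, k 1 (D i 1) (D c 1)) := by
    have : (0:ℝ) ≤ 2 * ((n : ℝ) ^ 3)⁻¹ := by positivity
    exact mul_nonneg this hQnn
  linarith

lemma myAux_sqrt_add (x y : ℝ) (hx : 0 ≤ x) (hy : 0 ≤ y) :
    Real.sqrt (x + y) ≤ Real.sqrt x + Real.sqrt y := by
  have h := Real.sqrt_le_sqrt (show x + y ≤ (Real.sqrt x + Real.sqrt y) ^ 2 by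
    nlinarith [Real.sq_sqrt hx, Real.sq_sqrt hy, Real.sqrt_nonneg x, Real.sqrt_nonneg y,
      mul_nonneg (Real.sqrt_nonneg x) (Real.sqrt_nonneg y)])
  rwa [Real.sqrt_sq (by positivity)] at h

end MyAux

set_option maxHeartbeats 1000000 in
/-- lower bound for the sensitivity of the permutation dHSIC
for `d = 2`, translation invariant kernels with non-empty level sets. -/
theorem permutation_dHSIC_sensitivity_lower_bound
    {n : ℕ} (hn : 3 ≤ n)
    (X : Fin 2 → Type*) [∀ j, AddGroup (X j)]
    (κ : ∀ j, X j → ℝ) (k : ∀ j, X j → X j → ℝ) (K : Fin 2 → ℝ)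
    (htrans : ∀ j, ∀ x y : X j, k j x y = κ j (x - y))
    (hKdef : ∀ j, K j = κ j 0)
    (hpsd : ∀ j, IsSymmPSDKernel (k j))
    (hbdd : ∀ j, ∀ x y : X j, 0 ≤ k j x y ∧ k j x y ≤ K j)
    (hlevel : ∀ j, ∀ ε : ℝ, 0 < ε → ε < K j → ∃ x y : X j, k j x y ≤ ε) :
    4 * ((n : ℝ) - 2.5) / (n : ℝ) ^ 2 * Real.sqrt (K 0 * K 1)
      ≤ sSup {v : ℝ |
          ∃ (π : Fin 2 → Equiv.Perm (Fin n)) (D D' : Fin n → ∀ j, X j),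
            hamD D D' ≤ 1 ∧
            v = |dHSICemp k (permuteD π D) - dHSICemp k (permuteD π D')|} := by
  classical
  have hn0 : n ≠ 0 := by omega
  have hN3 : (3 : ℝ) ≤ (n : ℝ) := by exact_mod_cast hn
  have hNpos : (0 : ℝ) < (n : ℝ) := by linarith
  have hNne : ((n : ℝ)) ≠ 0 := ne_of_gt hNpos
  have hK : ∀ j, 0 ≤ K j := fun j => le_trans (hbdd j 0 0).1 (hbdd j 0 0).2
  -- Bounded above
  have hbound : ∀ (E : Fin n → ∀ j, X j),
      dHSICemp k E ≤ Real.sqrt (2 * (K 0 * K 1)) :=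
    fun E => Real.sqrt_le_sqrt (myAux_Vstat_le hn0 k K hbdd hK E)
  have hb : BddAbove {v : ℝ |
      ∃ (π : Fin 2 → Equiv.Perm (Fin n)) (D D' : Fin n → ∀ j, X j),
        hamD D D' ≤ 1 ∧
        v = |dHSICemp k (permuteD π D) - dHSICemp k (permuteD π D')|} := by
    refine ⟨Real.sqrt (2 * (K 0 * K 1)), ?_⟩
    rintro x ⟨π', A, A', -, rfl⟩
    have h1 := hbound (permuteD π' A)
    have h2 := hbound (permuteD π' A')
    have g1 : 0 ≤ dHSICemp k (permuteD π' A) := Real.sqrt_nonneg _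
    have g2 : 0 ≤ dHSICemp k (permuteD π' A') := Real.sqrt_nonneg _
    rw [abs_le]
    constructor <;> linarith
  -- degenerate cases
  by_cases hK0pos : 0 < K 0
  swap
  · have h0 : K 0 = 0 := le_antisymm (not_lt.mp hK0pos) (hK 0)
    rw [h0, zero_mul, Real.sqrt_zero, mul_zero]
    refine Real.sSup_nonneg fun x hx => ?_
    obtain ⟨_, _, _, _, rfl⟩ := hx
    exact abs_nonneg _
  by_cases hK1pos : 0 < K 1
  swap
  · have h1 : K 1 = 0 := le_antisymm (not_lt.mp hK1pos) (hK 1)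
    rw [h1, mul_zero, Real.sqrt_zero, mul_zero]
    refine Real.sSup_nonneg fun x hx => ?_
    obtain ⟨_, _, _, _, rfl⟩ := hx
    exact abs_nonneg _
  -- main case
  set C : ℝ := 4 * ((n : ℝ) - 2.5) / (n : ℝ) ^ 2 with hCdef
  have hCpos : 0 < C := div_pos (by linarith) (by positivity)
  refine le_of_forall_sub_le fun δ hδ => ?_
  set ε : ℝ := min (K 0 / 2) (min (K 1 / 2) (δ ^ 2 / (C ^ 2 * (K 0 + K 1)))) with hεdef
  have hεpos : 0 < ε := by
    refine lt_min (by linarith) (lt_min (by linarith) ?_)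
    exact div_pos (pow_pos hδ 2) (mul_pos (pow_pos hCpos 2) (by linarith))
  have hεK0 : ε ≤ K 0 / 2 := min_le_left _ _
  have hεK1 : ε ≤ K 1 / 2 := le_trans (min_le_right _ _) (min_le_left _ _)
  have hεδ : ε ≤ δ ^ 2 / (C ^ 2 * (K 0 + K 1)) :=
    le_trans (min_le_right _ _) (min_le_right _ _)
  have hlt : ∀ j : Fin 2, ε < K j := by
    have h0 : ε < K 0 := lt_of_le_of_lt hεK0 (by linarith)
    have h1 : ε < K 1 := lt_of_le_of_lt hεK1 (by linarith)
    intro j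
    fin_cases j
    · exact h0
    · exact h1
  choose u v huvε using fun j => hlevel j ε hεpos (hlt j)
  set e : Fin 2 → ℝ := fun j => k j (u j) (v j) with hedef
  have huu : ∀ j, k j (u j) (u j) = K j := fun j => by
    rw [htrans j, sub_self, ← hKdef j]
  have hvv : ∀ j, k j (v j) (v j) = K j := fun j => by
    rw [htrans j, sub_self, ← hKdef j]
  have huvE : ∀ j, k j (u j) (v j) = e j := fun j => rfl
  have hvuE : ∀ j, k j (v j) (u j) = e j := fun j => by
    rw [(hpsd j).1 (v j) (u j)]
  have henn : ∀ j, 0 ≤ e j := fun j => (hbdd j _ _).1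
  have heε : ∀ j, e j ≤ ε := huvε
  -- the two distinguished indices
  set z0 : Fin n := ⟨0, by omega⟩ with hz0def
  set z1 : Fin n := ⟨1, by omega⟩ with hz1def
  have hz : z0 ≠ z1 := by
    intro h
    have := congrArg Fin.val h
    simp [hz0def, hz1def] at this
  set z : Fin 2 → Fin n := ![z0, z1] with hzdef
  have hzeq0 : z 0 = z0 := rfl
  have hzeq1 : z 1 = z1 := rfl
  set π : Fin 2 → Equiv.Perm (Fin n) := ![Equiv.swap z0 z1, 1] with hπdef
  set D : Fin n → ∀ j, X j := fun i j => if i = z1 then u j else v j with hDdef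
  set D' : Fin n → ∀ j, X j := fun i j => if i = z0 ∨ i = z1 then u j else v j with hD'def
  -- permuted datasets
  have hperm : permuteD π D = fun i j => if i = z j then u j else v j := by
    funext i j
    show D (π j i) j = _
    fin_cases j
    · show D ((Equiv.swap z0 z1) i) _ = if i = z0 then u _ else v _
      by_cases h : i = z0
      · subst h
        simp [hDdef, Equiv.swap_apply_left]
      · by_cases h1 : i = z1
        · subst h1
          simp [hDdef, Equiv.swap_apply_right, hz, hz.symm]
        · simp [hDdef, Equiv.swap_apply_of_ne_of_ne h h1, h, h1]
    · show D i _ = if i = z1 then u _ else v _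
      simp [hDdef]
  have hperm' : permuteD π D' = fun i j => if i = z0 ∨ i = z1 then u j else v j := by
    funext i j
    show D' (π j i) j = _
    fin_cases j
    · show D' ((Equiv.swap z0 z1) i) _ = if i = z0 ∨ i = z1 then u _ else v _
      by_cases h : i = z0
      · subst h
        simp [hD'def, Equiv.swap_apply_left]
      · by_cases h1 : i = z1
        · subst h1
          simp [hD'def, Equiv.swap_apply_right]
        · simp [hD'def, Equiv.swap_apply_of_ne_of_ne h h1, h, h1]
    · show D' i _ = if i = z0 ∨ i = z1 then u _ else v _
      simp [hD'def]
  -- Hamming distance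
  have hham : hamD D D' ≤ 1 := by
    have hsub : {i : Fin n | D i ≠ D' i} ⊆ {z0} := by
      intro i hi
      simp only [Set.mem_setOf_eq] at hi
      simp only [Set.mem_singleton_iff]
      by_contra h
      apply hi
      funext j
      show (if i = z1 then u j else v j) = if i = z0 ∨ i = z1 then u j else v j
      by_cases h1 : i = z1
      · simp [h1]
      · simp [h, h1]
    calc hamD D D' ≤ Set.ncard ({z0} : Set (Fin n)) :=
          Set.ncard_le_ncard hsub (Set.finite_singleton z0)
      _ = 1 := Set.ncard_singleton z0
  -- values of the two statistics
  have hV1 : Vstat k (permuteD π D) = 4 * ((K 0 - e 0) * (K 1 - e 1)) / (n : ℝ) ^ 4 := by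
    rw [hperm]
    exact myAux_Vstat_outlier hn0 k u v K e huu hvv huvE hvuE z
      (by rw [hzeq0, hzeq1]; exact hz)
  have hV2 : Vstat k (permuteD π D')
      = 4 * (2 * (n : ℝ) - 4) ^ 2 * ((K 0 - e 0) * (K 1 - e 1)) / (n : ℝ) ^ 4 := by
    rw [hperm']
    exact myAux_Vstat_pair hn0 k u v K e huu hvv huvE hvuE z0 z1 hz
  have hKe0 : 0 ≤ K 0 - e 0 := by have := heε 0; linarith
  have hKe1 : 0 ≤ K 1 - e 1 := by have := heε 1; linarith
  have hwnn : 0 ≤ (K 0 - e 0) * (K 1 - e 1) := mul_nonneg hKe0 hKe1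
  have hd1 : dHSICemp k (permuteD π D)
      = 2 / (n : ℝ) ^ 2 * Real.sqrt ((K 0 - e 0) * (K 1 - e 1)) := by
    show Real.sqrt _ = _
    rw [hV1, show 4 * ((K 0 - e 0) * (K 1 - e 1)) / (n : ℝ) ^ 4
        = (2 / (n : ℝ) ^ 2) ^ 2 * ((K 0 - e 0) * (K 1 - e 1)) by ring,
      Real.sqrt_mul (sq_nonneg _), Real.sqrt_sq (by positivity)]
  have hd2 : dHSICemp k (permuteD π D')
      = 2 * (2 * (n : ℝ) - 4) / (n : ℝ) ^ 2 * Real.sqrt ((K 0 - e 0) * (K 1 - e 1)) := by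
    show Real.sqrt _ = _
    rw [hV2, show 4 * (2 * (n : ℝ) - 4) ^ 2 * ((K 0 - e 0) * (K 1 - e 1)) / (n : ℝ) ^ 4
        = (2 * (2 * (n : ℝ) - 4) / (n : ℝ) ^ 2) ^ 2 * ((K 0 - e 0) * (K 1 - e 1)) by ring,
      Real.sqrt_mul (sq_nonneg _),
      Real.sqrt_sq (div_nonneg (by linarith) (by positivity))]
  have helem : |dHSICemp k (permuteD π D) - dHSICemp k (permuteD π D')|
      = C * Real.sqrt ((K 0 - e 0) * (K 1 - e 1)) := by
    rw [hd1, hd2]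
    have hsnn : 0 ≤ Real.sqrt ((K 0 - e 0) * (K 1 - e 1)) := Real.sqrt_nonneg _
    have hcoef : 2 / (n : ℝ) ^ 2 ≤ 2 * (2 * (n : ℝ) - 4) / (n : ℝ) ^ 2 :=
      (div_le_div_iff_of_pos_right (by positivity)).mpr (by linarith)
    have hprod := mul_le_mul_of_nonneg_right hcoef hsnn
    rw [abs_of_nonpos (by linarith)]
    rw [hCdef]
    ring
  have hmem : C * Real.sqrt ((K 0 - e 0) * (K 1 - e 1)) ∈ {v : ℝ |
      ∃ (π : Fin 2 → Equiv.Perm (Fin n)) (D D' : Fin n → ∀ j, X j),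
        hamD D D' ≤ 1 ∧
        v = |dHSICemp k (permuteD π D) - dHSICemp k (permuteD π D')|} :=
    ⟨π, D, D', hham, helem.symm⟩
  have hle := le_csSup hb hmem
  have hgapnn : 0 ≤ K 0 * K 1 - (K 0 - e 0) * (K 1 - e 1) := by
    nlinarith [mul_nonneg (henn 0) hKe1, mul_nonneg (henn 1) (hK 0)]
  have hgap : K 0 * K 1 - (K 0 - e 0) * (K 1 - e 1) ≤ ε * (K 0 + K 1) := by
    nlinarith [mul_nonneg (sub_nonneg.mpr (heε 0)) (hK 1),
      mul_nonneg (sub_nonneg.mpr (heε 1)) (hK 0), mul_nonneg (henn 0) (henn 1)]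
  have hsq : Real.sqrt (K 0 * K 1) ≤ Real.sqrt ((K 0 - e 0) * (K 1 - e 1))
      + Real.sqrt (ε * (K 0 + K 1)) := by
    have h1 := myAux_sqrt_add ((K 0 - e 0) * (K 1 - e 1))
      (K 0 * K 1 - (K 0 - e 0) * (K 1 - e 1)) hwnn hgapnn
    rw [show (K 0 - e 0) * (K 1 - e 1) + (K 0 * K 1 - (K 0 - e 0) * (K 1 - e 1))
        = K 0 * K 1 by ring] at h1
    have h2 := Real.sqrt_le_sqrt hgap
    linarith
  have hεd : Real.sqrt (ε * (K 0 + K 1)) ≤ δ / C := by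
    have h4 := mul_le_mul_of_nonneg_right hεδ (by linarith : (0:ℝ) ≤ K 0 + K 1)
    have h5 : δ ^ 2 / (C ^ 2 * (K 0 + K 1)) * (K 0 + K 1) = (δ / C) ^ 2 := by
      have hCne : C ≠ 0 := ne_of_gt hCpos
      have hKKne : K 0 + K 1 ≠ 0 := by positivity
      field_simp
    rw [h5] at h4
    calc Real.sqrt (ε * (K 0 + K 1)) ≤ Real.sqrt ((δ / C) ^ 2) := Real.sqrt_le_sqrt h4
      _ = δ / C := Real.sqrt_sq (by positivity)
  have hfinal : C * Real.sqrt (K 0 * K 1)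
      ≤ C * Real.sqrt ((K 0 - e 0) * (K 1 - e 1)) + δ := by
    have h6 := mul_le_mul_of_nonneg_left
      (le_trans hsq (add_le_add le_rfl hεd)) hCpos.le
    have heq : C * (Real.sqrt ((K 0 - e 0) * (K 1 - e 1)) + δ / C)
        = C * Real.sqrt ((K 0 - e 0) * (K 1 - e 1)) + δ := by
      field_simp
    rw [heq] at h6
    exact h6
  linarith

end
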